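/- In LP (values T, B, F, with T and B designated), the set of formulas built from ∧, ∨, ¬ that take a designated value under every LP valuation is exactly the set of classical two-valued tautologies in ∧, ∨, ¬. -/

import Mathlib

/-- Truth values of LP: T, B (both), F. T and B are designated. -/
inductive LP : Type | T | B | F
deriving DecidableEq

namespace LP

/-- Negation: swaps T and F, fixes B. -/
def neg : LP → LP | T => F | F => T | B => B

/-- Conjunction: meet w.r.t. F < B < T. -/
def and : LP → LP → LP
  | T, y => y | x, T => x
  | F, _ => F | _, F => F
  | B, B => B

/-- Disjunction: join w.r.t. F < B < T. -/
def or : LP → LP → LP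
  | F, y => y | x, F => x
  | T, _ => T | _, T => T
  | B, B => B

/-- Designated values of LP are T and B. -/
def designated (x : LP) : Prop := x = T ∨ x = B

end LP

/-- Propositional formulas built from ∧, ∨, ¬. -/
inductive Fml : Type
  | var : Nat → Fml
  | and : Fml → Fml → Fml
  | or : Fml → Fml → Fml
  | neg : Fml → Fml

/-- Evaluation of a formula under an LP valuation. -/
def evalLP (v : Nat → LP) : Fml → LP
  | .var n => v n
  | .and φ ψ => LP.and (evalLP v φ) (evalLP v ψ)
  | .or φ ψ => LP.or (evalLP v φ) (evalLP v ψ)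
  | .neg φ => LP.neg (evalLP v φ)

/-- Classical two-valued evaluation (the restriction of the LP tables to {T, F}). -/
def evalBool (v : Nat → Bool) : Fml → Bool
  | .var n => v n
  | .and φ ψ => evalBool v φ && evalBool v ψ
  | .or φ ψ => evalBool v φ || evalBool v ψ
  | .neg φ => ! evalBool v φ
def boolToLP (v : Nat → Bool) (n : Nat) : LP := if v n then LP.T else LP.F

lemma andIf (a b : Bool) :
    LP.and (if a then LP.T else LP.F) (if b then LP.T else LP.F) =
      if (a && b) then LP.T else LP.F := by
  cases a <;> cases b <;> simp [LP.and]

lemma orIf (a b : Bool) :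
    LP.or (if a then LP.T else LP.F) (if b then LP.T else LP.F) =
      if (a || b) then LP.T else LP.F := by
  cases a <;> cases b <;> simp [LP.or]

lemma negIf (a : Bool) :
    LP.neg (if a then LP.T else LP.F) = if (!a) then LP.T else LP.F := by
  cases a <;> simp [LP.neg]

lemma evalLP_boolToLP (v : Nat → Bool) (φ : Fml) :
    evalLP (boolToLP v) φ = if evalBool v φ then LP.T else LP.F := by
  induction φ with
  | var n => simp [evalLP, evalBool, boolToLP]; rfl
  | and φ ψ ih1 ih2 => simp only [evalLP, evalBool, ih1, ih2, andIf]; rfl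
  | or φ ψ ih1 ih2 => simp only [evalLP, evalBool, ih1, ih2, orIf]; rfl
  | neg φ ih => simp only [evalLP, evalBool, ih, negIf]; rfl

def lpToBool (v : Nat → LP) (n : Nat) : Bool := v n ≠ LP.F

lemma key (v : Nat → LP) (φ : Fml) :
    (evalLP v φ = LP.T → evalBool (lpToBool v) φ = true) ∧
    (evalLP v φ = LP.F → evalBool (lpToBool v) φ = false) := by
  induction φ with
  | var n =>
    cases h : v n <;> simp [evalLP, evalBool, lpToBool, h]
  | and φ ψ ih1 ih2 =>
    simp only [evalLP, evalBool]
    rcases h1 : evalLP v φ <;> rcases h2 : evalLP v ψ <;> simp_all [LP.and]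
  | or φ ψ ih1 ih2 =>
    simp only [evalLP, evalBool]
    rcases h1 : evalLP v φ <;> rcases h2 : evalLP v ψ <;> simp_all [LP.or]
  | neg φ ih =>
    simp only [evalLP, evalBool]
    rcases h1 : evalLP v φ <;> simp_all [LP.neg]

/-- The LP-valid formulas are exactly the classical tautologies. -/
theorem lp_valid_iff_classical_tautology :
    {φ : Fml | ∀ v : Nat → LP, LP.designated (evalLP v φ)} =
      {φ : Fml | ∀ v : Nat → Bool, evalBool v φ = true} := by
  ext φ
  simp only [Set.mem_setOf_eq]
  constructor
  · intro h v
    have := h (boolToLP v)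
    rw [evalLP_boolToLP] at this
    rcases this with h' | h' <;> cases hb : evalBool v φ <;> simp_all
  · intro h v
    have hb := h (lpToBool v)
    rcases he : evalLP v φ with _ | _ | _
    · exact Or.inl rfl
    · exact Or.inr rfl
    · exact absurd hb (by simp [(key v φ).2 he])
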